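/- Let K be a field with an additive valuation v : K → ℝ ∪ {∞}. Let n ≥ 2, let α_1,…,α_n ∈ K with v(α_i) = A_i, and suppose the indices can be ordered i_1,…,i_n so that A_{i_1} < A_{i_2} < ⋯ < A_{i_n}. Fix 1 ≤ p ≤ n−1 and let b, c ∈ K satisfy (b−α_1)(b−α_2)⋯(b−α_n) = (c−α_1)(c−α_2)⋯(c−α_n), v(b) = A_{i_p}, and v(c) = X_c with A_{i_p} < X_c < A_{i_{p+1}}. Then: v(b−α_{i_j}) = A_{i_j} for j = 1,…,p−1; v(b−α_{i_p}) = A_{i_p} + (n−p)·(X_c − A_{i_p}); v(b−α_{i_j}) = A_{i_p} for j = p+1,…,n; v(c−α_{i_j}) = A_{i_j} for j = 1,…,p; and v(c−α_{i_j}) = X_c for j = p+1,…,n. -/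
import Mathlib


/-- Valuations of `b - α_i` and `c - α_i` for two points `b`, `c` of the curve
`y = (x-α_1)⋯(x-α_n)` with equal `y`-values (Lemma 5.2 of the paper).
The indices are `0`-based: `σ j` plays the role of `i_{j+1}`, and `p : Fin n`
(with `p + 1 < n`) plays the role of the `1`-based index `p+1 ∈ {1,…,n-1}`;
accordingly the coefficient `n - p` (`1`-based) appears as `n - p - 1`. -/
theorem stmt_11 (K : Type*) [Field K] (v : K → WithTop ℝ)
    (hv_top : ∀ x : K, v x = ⊤ ↔ x = 0)
    (hv_mul : ∀ x y : K, v (x * y) = v x + v y)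
    (hv_add : ∀ x y : K, min (v x) (v y) ≤ v (x + y))
    (hv_eq : ∀ x y : K, v x ≠ v y → v (x + y) = min (v x) (v y))
    (n : ℕ) (hn : 2 ≤ n)
    (α : Fin n → K) (A : Fin n → ℝ)
    (hA : ∀ i : Fin n, v (α i) = ((A i : ℝ) : WithTop ℝ))
    (σ : Equiv.Perm (Fin n))
    (hord : StrictMono fun j : Fin n => A (σ j))
    (p : Fin n) (hp : (p : ℕ) + 1 < n)
    (b c : K) (Xc : ℝ)
    (hprod : ∏ i : Fin n, (b - α i) = ∏ i : Fin n, (c - α i))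
    (hvb : v b = ((A (σ p) : ℝ) : WithTop ℝ))
    (hvc : v c = ((Xc : ℝ) : WithTop ℝ))
    (hX1 : A (σ p) < Xc) (hX2 : Xc < A (σ ⟨(p : ℕ) + 1, hp⟩)) :
    (∀ j : Fin n, j < p → v (b - α (σ j)) = ((A (σ j) : ℝ) : WithTop ℝ)) ∧
    v (b - α (σ p)) =
      ((A (σ p) + ((n : ℝ) - (p : ℕ) - 1) * (Xc - A (σ p)) : ℝ) : WithTop ℝ) ∧
    (∀ j : Fin n, p < j → v (b - α (σ j)) = ((A (σ p) : ℝ) : WithTop ℝ)) ∧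
    (∀ j : Fin n, j ≤ p → v (c - α (σ j)) = ((A (σ j) : ℝ) : WithTop ℝ)) ∧
    (∀ j : Fin n, p < j → v (c - α (σ j)) = ((Xc : ℝ) : WithTop ℝ)) := by
  -- basic facts about v
  have h1 : v 1 = 0 := by
    have h := hv_mul 1 1
    rw [one_mul] at h
    have hne : v 1 ≠ ⊤ := by simp [hv_top]
    obtain ⟨r, hr⟩ := WithTop.ne_top_iff_exists.mp hne
    rw [← hr, ← WithTop.coe_add, WithTop.coe_eq_coe] at h
    have : r = 0 := by linarith
    rw [← hr, this]; rfl
  have hneg1 : v (-1 : K) = 0 := by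
    have h := hv_mul (-1 : K) (-1)
    rw [neg_mul_neg, one_mul, h1] at h
    have hne : v (-1 : K) ≠ ⊤ := by simp [hv_top]
    obtain ⟨r, hr⟩ := WithTop.ne_top_iff_exists.mp hne
    rw [← hr, ← WithTop.coe_add] at h
    have : (0 : WithTop ℝ) = ((0 : ℝ) : WithTop ℝ) := rfl
    rw [this, WithTop.coe_eq_coe] at h
    have : r = 0 := by linarith
    rw [← hr, this]; rfl
  have hvneg : ∀ x : K, v (-x) = v x := by
    intro x
    have : (-x : K) = (-1) * x := by ring
    rw [this, hv_mul, hneg1, zero_add]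
  have hsub : ∀ x y : K, v x ≠ v y → v (x - y) = min (v x) (v y) := by
    intro x y h
    rw [sub_eq_add_neg, hv_eq x (-y) (by rw [hvneg]; exact h), hvneg]
  -- the four easy claims
  have claim_b_lt : ∀ j : Fin n, j < p → v (b - α (σ j)) = ((A (σ j) : ℝ) : WithTop ℝ) := by
    intro j hj
    have hlt : A (σ j) < A (σ p) := hord hj
    have hne : v b ≠ v (α (σ j)) := by
      rw [hvb, hA]; exact fun h => absurd (WithTop.coe_eq_coe.mp h).symm (ne_of_lt hlt)
    rw [hsub _ _ hne, hvb, hA, min_eq_right (WithTop.coe_le_coe.mpr hlt.le)]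
  have claim_b_gt : ∀ j : Fin n, p < j → v (b - α (σ j)) = ((A (σ p) : ℝ) : WithTop ℝ) := by
    intro j hj
    have hlt : A (σ p) < A (σ j) := hord hj
    have hne : v b ≠ v (α (σ j)) := by
      rw [hvb, hA]; exact fun h => absurd (WithTop.coe_eq_coe.mp h) (ne_of_lt hlt)
    rw [hsub _ _ hne, hvb, hA, min_eq_left (WithTop.coe_le_coe.mpr hlt.le)]
  have claim_c_le : ∀ j : Fin n, j ≤ p → v (c - α (σ j)) = ((A (σ j) : ℝ) : WithTop ℝ) := by
    intro j hj
    have hlt : A (σ j) < Xc := lt_of_le_of_lt (hord.monotone hj) hX1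
    have hne : v c ≠ v (α (σ j)) := by
      rw [hvc, hA]; exact fun h => absurd (WithTop.coe_eq_coe.mp h).symm (ne_of_lt hlt)
    rw [hsub _ _ hne, hvc, hA, min_eq_right (WithTop.coe_le_coe.mpr hlt.le)]
  have claim_c_gt : ∀ j : Fin n, p < j → v (c - α (σ j)) = ((Xc : ℝ) : WithTop ℝ) := by
    intro j hj
    have hle : (⟨(p : ℕ) + 1, hp⟩ : Fin n) ≤ j := by
      have : (p : ℕ) < (j : ℕ) := hj
      exact Fin.mk_le_of_le_val this
    have hlt : Xc < A (σ j) := lt_of_lt_of_le hX2 (hord.monotone hle)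
    have hne : v c ≠ v (α (σ j)) := by
      rw [hvc, hA]; exact fun h => absurd (WithTop.coe_eq_coe.mp h) (ne_of_lt hlt)
    rw [hsub _ _ hne, hvc, hA, min_eq_left (WithTop.coe_le_coe.mpr hlt.le)]
  -- valuation of products
  have hv_prod : ∀ (s : Finset (Fin n)) (f : Fin n → K),
      v (∏ i ∈ s, f i) = ∑ i ∈ s, v (f i) := by
    intro s f
    induction s using Finset.cons_induction with
    | empty => simpa using h1
    | cons a s ha ih => rw [Finset.prod_cons, Finset.sum_cons, hv_mul, ih]
  have key : ∑ j : Fin n, v (b - α (σ j)) = ∑ j : Fin n, v (c - α (σ j)) := by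
    rw [← hv_prod, ← hv_prod, Equiv.prod_comp σ (fun i => b - α i),
      Equiv.prod_comp σ (fun i => c - α i), hprod]
  -- split off j = p
  have hsplit_b : v (b - α (σ p)) + ∑ j ∈ Finset.univ.erase p, v (b - α (σ j)) =
      ∑ j : Fin n, v (b - α (σ j)) :=
    Finset.add_sum_erase Finset.univ (fun j => v (b - α (σ j))) (Finset.mem_univ p)
  have hsplit_c : v (c - α (σ p)) + ∑ j ∈ Finset.univ.erase p, v (c - α (σ j)) =
      ∑ j : Fin n, v (c - α (σ j)) :=
    Finset.add_sum_erase Finset.univ (fun j => v (c - α (σ j))) (Finset.mem_univ p)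
  set B : Fin n → ℝ := fun j => if j < p then A (σ j) else A (σ p) with hB
  set C : Fin n → ℝ := fun j => if j ≤ p then A (σ j) else Xc with hC
  have hBval : ∀ j ∈ Finset.univ.erase p, v (b - α (σ j)) = ((B j : ℝ) : WithTop ℝ) := by
    intro j hj
    have hne := Finset.ne_of_mem_erase hj
    rcases lt_or_gt_of_ne hne with h | h
    · rw [claim_b_lt j h, hB]; simp [h]
    · rw [claim_b_gt j h, hB]; simp [not_lt_of_gt h]
  have hCval : ∀ j ∈ Finset.univ.erase p, v (c - α (σ j)) = ((C j : ℝ) : WithTop ℝ) := by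
    intro j hj
    have hne := Finset.ne_of_mem_erase hj
    rcases lt_or_gt_of_ne hne with h | h
    · rw [claim_c_le j h.le, hC]; simp [h.le]
    · rw [claim_c_gt j h, hC]; simp [not_le_of_gt h]
  have hsumB : ∑ j ∈ Finset.univ.erase p, v (b - α (σ j)) =
      ((∑ j ∈ Finset.univ.erase p, B j : ℝ) : WithTop ℝ) := by
    rw [Finset.sum_congr rfl hBval, WithTop.coe_sum]
  have hsumC : ∑ j ∈ Finset.univ.erase p, v (c - α (σ j)) =
      ((∑ j ∈ Finset.univ.erase p, C j : ℝ) : WithTop ℝ) := by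
    rw [Finset.sum_congr rfl hCval, WithTop.coe_sum]
  set rB : ℝ := ∑ j ∈ Finset.univ.erase p, B j
  set rC : ℝ := ∑ j ∈ Finset.univ.erase p, C j
  have heq : v (b - α (σ p)) + (rB : WithTop ℝ) =
      ((A (σ p) + rC : ℝ) : WithTop ℝ) := by
    rw [← hsumB]
    rw [hsplit_b, key, ← hsplit_c, hsumC, claim_c_le p le_rfl, WithTop.coe_add]
  -- cancellation
  have hbp : v (b - α (σ p)) = ((A (σ p) + rC - rB : ℝ) : WithTop ℝ) := by
    have hxne : v (b - α (σ p)) ≠ ⊤ := by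
      intro h
      rw [h, top_add] at heq
      exact WithTop.coe_ne_top heq.symm
    obtain ⟨t, ht⟩ := WithTop.ne_top_iff_exists.mp hxne
    rw [← ht, ← WithTop.coe_add, WithTop.coe_eq_coe] at heq
    rw [← ht, WithTop.coe_eq_coe]
    linarith
  -- compute the real number
  have hcard : (Finset.univ.filter (fun j : Fin n => p < j)).card = n - 1 - (p : ℕ) := by
    rw [Finset.filter_lt_eq_Ioi, Fin.card_Ioi]
  have hdiff : rC - rB = ((n : ℝ) - (p : ℕ) - 1) * (Xc - A (σ p)) := by
    have : rC - rB = ∑ j ∈ Finset.univ.erase p, (C j - B j) := by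
      rw [Finset.sum_sub_distrib]
    rw [this]
    have hCB : ∀ j ∈ Finset.univ.erase p, C j - B j =
        if p < j then Xc - A (σ p) else 0 := by
      intro j hj
      have hne := Finset.ne_of_mem_erase hj
      rcases lt_or_gt_of_ne hne with h | h
      · simp [hB, hC, h, h.le, not_lt_of_gt h]
      · simp [hB, hC, h, not_le_of_gt h, asymm h]
    rw [Finset.sum_congr rfl hCB, ← Finset.sum_filter]
    have hfe : (Finset.univ.erase p).filter (fun j => p < j) =
        Finset.univ.filter (fun j : Fin n => p < j) := by
      ext j
      simp only [Finset.mem_filter, Finset.mem_erase, Finset.mem_univ, true_and, and_true]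
      exact ⟨fun h => h.2, fun h => ⟨ne_of_gt h, h⟩⟩
    rw [hfe, Finset.sum_const, hcard, nsmul_eq_mul]
    have hnp : ((n - 1 - (p : ℕ) : ℕ) : ℝ) = (n : ℝ) - (p : ℕ) - 1 := by
      rw [Nat.sub_sub, Nat.cast_sub (by omega)]
      push_cast
      ring
    rw [hnp]
  have hfinal : A (σ p) + rC - rB = A (σ p) + ((n : ℝ) - (p : ℕ) - 1) * (Xc - A (σ p)) := by
    rw [← hdiff]; ring
  refine ⟨claim_b_lt, ?_, claim_b_gt, claim_c_le, claim_c_gt⟩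
  rw [hbp, hfinal]
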